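/- Heterogeneous (dynamic) SIR mechanism: let q₁,…,q_N be probability densities on ℝ and p₁,…,p_N be nonnegative integrable functions on ℝ with q_i(x) > 0 whenever p_i(x) > 0 and Σᵢ ∫ p_i > 0. Draw X̃¹,…,X̃ᴺ independently with X̃ⁱ ~ q_i, then draw an index L with P(L = i | X̃¹,…,X̃ᴺ) proportional to (p_i/q_i)(X̃ⁱ), and set X = X̃^L. Then X has probability density q̃_N(x) = Σ_{i=1}^N h_i(x) q_i(x), where h_i(x) = ∫_{ℝ^{N−1}} [(p_i/q_i)(x) / ((p_i/q_i)(x) + Σ_{l≠i} (p_l/q_l)(x_l))] ∏_{l≠i} q_l(x_l) dx_l. -/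

import Mathlib

open MeasureTheory ProbabilityTheory Finset Filter Topology

noncomputable section

/-- Heterogeneous importance weight function `w_i = p_i / q_i`. -/
def wHet {N : ℕ} (p q : Fin N → ℝ → ℝ) (i : Fin N) (x : ℝ) : ℝ := p i x / q i x

/-- `h_i(x)`: the conditional expectation of the `i`-th normalized importance weight given
that the `i`-th proposed particle equals `x`, the other particles `X̃^l ∼ q_l` (`l ≠ i`)
being drawn independently. -/
def hHet {N : ℕ} (p q : Fin N → ℝ → ℝ) (i : Fin N) (x : ℝ) : ℝ :=
  ∫ y : {l : Fin N // l ≠ i} → ℝ,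
    (wHet p q i x / (wHet p q i x + ∑ l : {l : Fin N // l ≠ i}, wHet p q l.1 (y l))) *
      ∏ l : {l : Fin N // l ≠ i}, q l.1 (y l)

/-- The compound (mixture) importance function `q̃_N(x) = ∑_i h_i(x) q_i(x)`. -/
def qTildeHet {N : ℕ} (p q : Fin N → ℝ → ℝ) (x : ℝ) : ℝ := ∑ i, hHet p q i x * q i x

section Aux
variable {N : ℕ} {p q : Fin N → ℝ → ℝ}

lemma sum_split {M : Type*} [AddCommMonoid M] (i : Fin N) (f : Fin N → M) :
    ∑ j, f j = f i + ∑ j : {l : Fin N // ¬ l = i}, f j.1 := by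
  classical
  rw [← Finset.sum_subtype (Finset.univ.erase i) (fun l => by simp) f]
  exact (Finset.add_sum_erase _ f (Finset.mem_univ i)).symm

lemma prod_split {M : Type*} [CommMonoid M] (i : Fin N) (f : Fin N → M) :
    ∏ j, f j = f i * ∏ j : {l : Fin N // ¬ l = i}, f j.1 := by
  classical
  rw [← Finset.prod_subtype (Finset.univ.erase i) (fun l => by simp) f]
  exact (Finset.mul_prod_erase _ f (Finset.mem_univ i)).symm

lemma q_int (hq1 : ∀ i, ∫ x, q i x = 1) (i : Fin N) : Integrable (q i) := by
  by_contra h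
  have := hq1 i
  rw [integral_undef h] at this
  exact zero_ne_one this

variable (hpm : ∀ i, Measurable (p i)) (hqm : ∀ i, Measurable (q i))
  (hp0 : ∀ i x, 0 ≤ p i x) (hq0 : ∀ i x, 0 ≤ q i x) (hq1 : ∀ i, ∫ x, q i x = 1)

include hp0 hq0 in
lemma wHet_nonneg (i : Fin N) (x : ℝ) : 0 ≤ wHet p q i x := div_nonneg (hp0 i x) (hq0 i x)

include hpm hqm in
lemma wHet_meas (i : Fin N) : Measurable (wHet p q i) := (hpm i).div (hqm i)

def Finn (p q : Fin N → ℝ → ℝ) (i : Fin N) : ℝ × ({l : Fin N // l ≠ i} → ℝ) → ℝ :=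
  fun z => (wHet p q i z.1 / (wHet p q i z.1 + ∑ l : {l : Fin N // l ≠ i}, wHet p q l.1 (z.2 l))) *
      ∏ l : {l : Fin N // l ≠ i}, q l.1 (z.2 l)

include hpm hqm in
lemma Finn_meas (i : Fin N) : Measurable (Finn p q i) := by
  apply Measurable.mul
  · apply Measurable.div
    · exact (wHet_meas hpm hqm i).comp measurable_fst
    · apply Measurable.add
      · exact (wHet_meas hpm hqm i).comp measurable_fst
      · exact Finset.measurable_sum _ fun l _ =>
          (wHet_meas hpm hqm l.1).comp ((measurable_pi_apply l).comp measurable_snd)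
  · exact Finset.measurable_prod _ fun l _ =>
      (hqm l.1).comp ((measurable_pi_apply l).comp measurable_snd)

include hp0 hq0 in
lemma Finn_nonneg (i : Fin N) (z : ℝ × ({l : Fin N // l ≠ i} → ℝ)) : 0 ≤ Finn p q i z :=
  mul_nonneg (div_nonneg (wHet_nonneg hp0 hq0 i z.1)
      (add_nonneg (wHet_nonneg hp0 hq0 i z.1)
        (Finset.sum_nonneg fun l _ => wHet_nonneg hp0 hq0 l.1 (z.2 l))))
    (Finset.prod_nonneg fun l _ => hq0 l.1 (z.2 l))

include hp0 hq0 in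
lemma Finn_le (i : Fin N) (z : ℝ × ({l : Fin N // l ≠ i} → ℝ)) :
    Finn p q i z ≤ ∏ l : {l : Fin N // l ≠ i}, q l.1 (z.2 l) := by
  have hs : 0 ≤ ∑ l : {l : Fin N // l ≠ i}, wHet p q l.1 (z.2 l) :=
    Finset.sum_nonneg fun l _ => wHet_nonneg hp0 hq0 l.1 (z.2 l)
  have h1 : wHet p q i z.1 / (wHet p q i z.1 + ∑ l : {l : Fin N // l ≠ i}, wHet p q l.1 (z.2 l)) ≤ 1 :=
    div_le_one_of_le₀ (le_add_of_nonneg_right hs)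
      (add_nonneg (wHet_nonneg hp0 hq0 i z.1) hs)
  exact mul_le_of_le_one_left (Finset.prod_nonneg fun l _ => hq0 l.1 (z.2 l)) h1

include hq1 in
lemma prod_sub_int (i : Fin N) :
    Integrable (fun y : {l : Fin N // l ≠ i} → ℝ => ∏ l, q l.1 (y l)) :=
  Integrable.fintype_prod fun l => q_int hq1 l.1

include hpm hqm hp0 hq0 hq1 in
lemma inner_int (i : Fin N) (a : ℝ) :
    Integrable (fun y : {l : Fin N // l ≠ i} → ℝ => Finn p q i (a, y)) := by
  refine (prod_sub_int hq1 i).mono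
    (((Finn_meas hpm hqm i).comp (measurable_const.prodMk measurable_id)).aestronglyMeasurable)
    (Filter.Eventually.of_forall fun y => ?_)
  rw [Real.norm_of_nonneg (Finn_nonneg hp0 hq0 i (a, y)),
    Real.norm_of_nonneg (Finset.prod_nonneg fun l _ => hq0 l.1 (y l))]
  exact Finn_le hp0 hq0 i (a, y)

include hp0 hq0 in
lemma hHet_nonneg (i : Fin N) (a : ℝ) : 0 ≤ hHet p q i a :=
  integral_nonneg fun y => Finn_nonneg hp0 hq0 i (a, y)

include hpm hqm hp0 hq0 hq1 in
lemma hHet_le_one (i : Fin N) (a : ℝ) : hHet p q i a ≤ 1 := by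
  have h1 : hHet p q i a ≤ ∫ y : {l : Fin N // l ≠ i} → ℝ, ∏ l, q l.1 (y l) :=
    integral_mono (inner_int hpm hqm hp0 hq0 hq1 i a) (prod_sub_int hq1 i)
      (fun y => Finn_le hp0 hq0 i (a, y))
  have h2 : ∫ y : {l : Fin N // l ≠ i} → ℝ, ∏ l, q l.1 (y l) = 1 := by
    rw [volume_pi, MeasureTheory.integral_fintype_prod_eq_prod (fun l : {l : Fin N // l ≠ i} => q l.1)]
    exact Finset.prod_eq_one fun l _ => hq1 l.1
  linarith

include hpm hqm in
lemma hHet_meas (i : Fin N) : Measurable (hHet p q i) := by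
  have : StronglyMeasurable (fun a : ℝ => ∫ y, Finn p q i (a, y)) :=
    (Finn_meas hpm hqm i).stronglyMeasurable.integral_prod_right'
  exact this.measurable

include hpm hqm hp0 hq0 hq1 in
lemma key (i : Fin N) (A : Set ℝ) (hA : MeasurableSet A) :
    ∫ x in {x : Fin N → ℝ | x i ∈ A},
        (wHet p q i (x i) / ∑ j, wHet p q j (x j)) * ∏ l, q l (x l)
      = ∫ a in A, hHet p q i a * q i a := by
  classical
  haveI : Unique {l : Fin N // l = i} := ⟨⟨⟨i, rfl⟩⟩, fun a => Subtype.ext a.2⟩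
  set G : (Fin N → ℝ) → ℝ :=
    fun x => (wHet p q i (x i) / ∑ j, wHet p q j (x j)) * ∏ l, q l (x l) with hGdef
  set B : Set (Fin N → ℝ) := {x | x i ∈ A} with hBdef
  have hBm : MeasurableSet B := (measurable_pi_apply i) hA
  set K : ({l : Fin N // l = i} → ℝ) × ({l : Fin N // ¬ l = i} → ℝ) → ℝ := fun z =>
    Set.indicator A (fun a => q i a * Finn p q i (a, z.2)) (z.1 ⟨i, rfl⟩) with hKdef
  have mp : MeasurePreserving
      (MeasurableEquiv.piEquivPiSubtypeProd (fun _ : Fin N => ℝ) (fun l => l = i))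
      (Measure.pi fun _ : Fin N => (volume : Measure ℝ))
      ((Measure.pi fun _ : {l : Fin N // l = i} => (volume : Measure ℝ)).prod
        (Measure.pi fun _ : {l : Fin N // ¬ l = i} => (volume : Measure ℝ))) := by
    convert measurePreserving_piEquivPiSubtypeProd
      (fun _ : Fin N => (volume : Measure ℝ)) (fun l => l = i) using 4 <;>
      first | rfl | exact Subsingleton.elim _ _
  have mpu : MeasurePreserving (MeasurableEquiv.funUnique {l : Fin N // l = i} ℝ)
      (Measure.pi fun _ : {l : Fin N // l = i} => (volume : Measure ℝ)) (volume : Measure ℝ) := by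
    convert measurePreserving_funUnique (volume : Measure ℝ) {l : Fin N // l = i} using 4 <;>
      first | rfl | exact Subsingleton.elim _ _
  -- pointwise identity
  have step1 : ∀ x : Fin N → ℝ, Set.indicator B G x =
      K (MeasurableEquiv.piEquivPiSubtypeProd (fun _ : Fin N => ℝ) (fun l => l = i) x) := by
    intro x
    by_cases hx : x i ∈ A
    · rw [Set.indicator_of_mem (show x ∈ B from hx) G, hKdef]
      show G x = Set.indicator A (fun a => q i a * Finn p q i (a, fun l => x l.1)) (x i)
      rw [Set.indicator_of_mem hx]
      show G x = q i (x i) * Finn p q i (x i, fun l => x l.1)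
      rw [hGdef]
      show (wHet p q i (x i) / ∑ j, wHet p q j (x j)) * ∏ l, q l (x l)
        = q i (x i) *
          ((wHet p q i (x i) /
              (wHet p q i (x i) + ∑ l : {l : Fin N // ¬ l = i}, wHet p q l.1 (x l.1))) *
            ∏ l : {l : Fin N // ¬ l = i}, q l.1 (x l.1))
      rw [sum_split i (fun j => wHet p q j (x j)), prod_split i (fun l => q l (x l))]
      ring
    · rw [Set.indicator_of_notMem (show x ∉ B from hx) G, hKdef]
      show (0 : ℝ) = Set.indicator A (fun a => q i a * Finn p q i (a, fun l => x l.1)) (x i)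
      rw [Set.indicator_of_notMem hx]
  -- integrability of G
  have hGm : Measurable G := by
    apply Measurable.mul
    · exact ((wHet_meas hpm hqm i).comp (measurable_pi_apply i)).div
        (Finset.measurable_sum _ fun j _ => (wHet_meas hpm hqm j).comp (measurable_pi_apply j))
    · exact Finset.measurable_prod _ fun l _ => (hqm l).comp (measurable_pi_apply l)
  have hGint : Integrable G := by
    refine (Integrable.fintype_prod fun l => q_int hq1 l :
        Integrable fun x : Fin N → ℝ => ∏ l, q l (x l)).mono
      hGm.aestronglyMeasurable (Filter.Eventually.of_forall fun x => ?_)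
    have hs0 : 0 ≤ ∑ j, wHet p q j (x j) :=
      Finset.sum_nonneg fun j _ => wHet_nonneg hp0 hq0 j (x j)
    have hpr0 : 0 ≤ ∏ l, q l (x l) := Finset.prod_nonneg fun l _ => hq0 l (x l)
    have hG0 : 0 ≤ G x :=
      mul_nonneg (div_nonneg (wHet_nonneg hp0 hq0 i (x i)) hs0) hpr0
    rw [Real.norm_of_nonneg hG0, Real.norm_of_nonneg hpr0]
    exact mul_le_of_le_one_left hpr0
      (div_le_one_of_le₀ (Finset.single_le_sum
        (fun j _ => wHet_nonneg hp0 hq0 j (x j)) (Finset.mem_univ i)) hs0)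
  -- transport of the measure
  have hmap1 : (volume : Measure (Fin N → ℝ)).map
      (MeasurableEquiv.piEquivPiSubtypeProd (fun _ : Fin N => ℝ) (fun l => l = i)) =
      (Measure.pi fun _ : {l : Fin N // l = i} => (volume : Measure ℝ)).prod
        (Measure.pi fun _ : {l : Fin N // ¬ l = i} => (volume : Measure ℝ)) := by
    rw [volume_pi]; exact mp.map_eq
  -- integrability of K
  have hKint : Integrable K
      ((Measure.pi fun _ : {l : Fin N // l = i} => (volume : Measure ℝ)).prod
        (Measure.pi fun _ : {l : Fin N // ¬ l = i} => (volume : Measure ℝ))) := by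
    rw [← hmap1]
    rw [(MeasurableEquiv.piEquivPiSubtypeProd (fun _ : Fin N => ℝ)
      (fun l => l = i)).measurableEmbedding.integrable_map_iff]
    have hke : (K ∘ (MeasurableEquiv.piEquivPiSubtypeProd (fun _ : Fin N => ℝ)
        (fun l => l = i))) = Set.indicator B G := funext fun x => (step1 x).symm
    rw [hke]
    exact hGint.indicator hBm
  have hmap2 : (Measure.pi fun _ : {l : Fin N // l = i} => (volume : Measure ℝ)).map
      (MeasurableEquiv.funUnique {l : Fin N // l = i} ℝ) = (volume : Measure ℝ) :=
    mpu.map_eq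
  -- main calc
  calc ∫ x in B, G x = ∫ x, Set.indicator B G x := (integral_indicator hBm).symm
    _ = ∫ x, K (MeasurableEquiv.piEquivPiSubtypeProd (fun _ : Fin N => ℝ) (fun l => l = i) x) := by
        simp only [step1]
    _ = ∫ z, K z ∂((Measure.pi fun _ : {l : Fin N // l = i} => (volume : Measure ℝ)).prod
          (Measure.pi fun _ : {l : Fin N // ¬ l = i} => (volume : Measure ℝ))) := by
        rw [← hmap1]
        exact (integral_map_equiv _ K).symm
    _ = ∫ u, ∫ y, K (u, y)
          ∂(Measure.pi fun _ : {l : Fin N // ¬ l = i} => (volume : Measure ℝ))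
          ∂(Measure.pi fun _ : {l : Fin N // l = i} => (volume : Measure ℝ)) :=
        integral_prod K hKint
    _ = ∫ u, Set.indicator A (fun a => q i a * hHet p q i a) (u ⟨i, rfl⟩)
          ∂(Measure.pi fun _ : {l : Fin N // l = i} => (volume : Measure ℝ)) := by
        refine integral_congr_ae (Filter.Eventually.of_forall fun u => ?_)
        dsimp only
        by_cases hu : u ⟨i, rfl⟩ ∈ A
        · rw [Set.indicator_of_mem hu]
          simp only [hKdef, Set.indicator_of_mem hu]
          rw [integral_const_mul]
          congr 1
        · rw [Set.indicator_of_notMem hu]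
          simp only [hKdef, Set.indicator_of_notMem hu]
          exact integral_zero _ _
    _ = ∫ a, Set.indicator A (fun a => q i a * hHet p q i a) a := by
        conv_rhs => rw [← hmap2]
        have hfu : (fun u : {l : Fin N // l = i} → ℝ =>
            Set.indicator A (fun a => q i a * hHet p q i a) (u ⟨i, rfl⟩)) =
            fun u => Set.indicator A (fun a => q i a * hHet p q i a)
              ((MeasurableEquiv.funUnique {l : Fin N // l = i} ℝ) u) := by
          funext u
          simp only [MeasurableEquiv.funUnique, Equiv.funUnique, MeasurableEquiv.coe_mk,
            Equiv.coe_fn_mk, MeasurableEquiv.piUnique, Equiv.piUnique]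
          have hd : (⟨i, rfl⟩ : {l : Fin N // l = i}) = default := Subsingleton.elim _ _
          rw [hd]
        rw [hfu]
        exact (integral_map_equiv (MeasurableEquiv.funUnique {l : Fin N // l = i} ℝ)
          (Set.indicator A (fun a => q i a * hHet p q i a))).symm
    _ = ∫ a in A, q i a * hHet p q i a := integral_indicator hA
    _ = ∫ a in A, hHet p q i a * q i a := by simp only [mul_comm]

end Aux

/-- heterogeneous (dynamic) SIR mechanism.  With `X̃^1, …, X̃^N` independent,
`X̃^i ∼ q_i`, and an index `L` drawn with `P(L = i | X̃) ∝ (p_i/q_i)(X̃^i)`, the output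
`X = X̃^L` has probability density `q̃_N(x) = ∑_i h_i(x) q_i(x)` w.r.t. Lebesgue measure. -/
theorem het_sir_output_density
    (Ω : Type) [MeasurableSpace Ω] (μ : Measure Ω) [IsProbabilityMeasure μ]
    (N : ℕ) (p q : Fin N → ℝ → ℝ)
    (hpm : ∀ i, Measurable (p i)) (hqm : ∀ i, Measurable (q i))
    (hp0 : ∀ i x, 0 ≤ p i x) (hq0 : ∀ i x, 0 ≤ q i x)
    (hpint : ∀ i, Integrable (p i)) (hq1 : ∀ i, ∫ x, q i x = 1)
    (hsupp : ∀ i x, 0 < p i x → 0 < q i x)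
    (hppos : 0 < ∑ i, ∫ x, p i x)
    -- the proposed particles `X̃ = (X̃^1, …, X̃^N)`, independent with `X̃^i ∼ q_i`
    (Xt : Ω → Fin N → ℝ) (hXtm : Measurable Xt)
    (hXtlaw : Measure.map Xt μ =
      Measure.pi fun i => volume.withDensity fun x => ENNReal.ofReal (q i x))
    -- the selection index `L`, with `P(L = i | X̃) = w_i(X̃^i)/∑_j w_j(X̃^j)`
    (L : Ω → Fin N) (hLm : Measurable L)
    (hjoint : ∀ (i : Fin N) (B : Set (Fin N → ℝ)), MeasurableSet B →
      μ {ω | L ω = i ∧ Xt ω ∈ B} =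
        ENNReal.ofReal (∫ x in B,
          (wHet p q i (x i) / ∑ j, wHet p q j (x j)) * ∏ l, q l (x l))) :
    -- the output `X = X̃^L` has density `q̃_N`
    ∀ A : Set ℝ, MeasurableSet A →
      μ {ω | Xt ω (L ω) ∈ A} = ENNReal.ofReal (∫ x in A, qTildeHet p q x) := by
  intro A hA
  classical
  have hBmeas : ∀ i : Fin N, MeasurableSet {x : Fin N → ℝ | x i ∈ A} :=
    fun i => (measurable_pi_apply i) hA
  have hset : {ω | Xt ω (L ω) ∈ A} =
      ⋃ i, {ω | L ω = i ∧ Xt ω ∈ {x : Fin N → ℝ | x i ∈ A}} := by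
    ext ω
    simp only [Set.mem_setOf_eq, Set.mem_iUnion]
    constructor
    · intro h; exact ⟨L ω, rfl, h⟩
    · rintro ⟨i, hi, hx⟩; rw [hi]; exact hx
  have hdisj : Pairwise (Function.onFun Disjoint
      fun i => {ω | L ω = i ∧ Xt ω ∈ {x : Fin N → ℝ | x i ∈ A}}) := by
    intro i j hij
    refine Set.disjoint_left.mpr fun ω h1 h2 => hij ?_
    rw [← h1.1, ← h2.1]
  have hms : ∀ i, MeasurableSet {ω | L ω = i ∧ Xt ω ∈ {x : Fin N → ℝ | x i ∈ A}} := by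
    intro i
    exact (hLm (measurableSet_singleton i)).inter (hXtm (hBmeas i))
  rw [hset, measure_iUnion hdisj hms, tsum_fintype]
  have hterm : ∀ i : Fin N, μ {ω | L ω = i ∧ Xt ω ∈ {x : Fin N → ℝ | x i ∈ A}} =
      ENNReal.ofReal (∫ a in A, hHet p q i a * q i a) := by
    intro i
    rw [hjoint i _ (hBmeas i), key hpm hqm hp0 hq0 hq1 i A hA]
  simp_rw [hterm]
  rw [← ENNReal.ofReal_sum_of_nonneg (fun i _ => setIntegral_nonneg hA
    (fun a _ => mul_nonneg (hHet_nonneg hp0 hq0 i a) (hq0 i a)))]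
  congr 1
  have hint : ∀ i ∈ Finset.univ, IntegrableOn (fun a => hHet p q i a * q i a) A := by
    intro i _
    refine ((q_int hq1 i).restrict (s := A)).mono
      (((hHet_meas hpm hqm i).mul (hqm i)).aestronglyMeasurable.restrict)
      (Filter.Eventually.of_forall fun a => ?_)
    rw [Real.norm_of_nonneg (mul_nonneg (hHet_nonneg hp0 hq0 i a) (hq0 i a)),
      Real.norm_of_nonneg (hq0 i a)]
    exact mul_le_of_le_one_left (hq0 i a) (hHet_le_one hpm hqm hp0 hq0 hq1 i a)
  rw [← integral_finset_sum Finset.univ hint]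
  rfl
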